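/- Let k ≥ 3, 0 ≤ b < k, and let H be a k-uniform hypergraph on m vertices (m ≥ 2k−b) containing no copy of Y_{k,b}. Then e(H) ≤ C(m,k)·(k−b)/(m−b). -/

import Mathlib

open Finset

theorem erdos_ko_rado_general {α : Type*} [Fintype α] [DecidableEq α]
    {𝒜 : Finset (Finset α)} {r : ℕ}
    (h𝒜 : (𝒜 : Set (Finset α)).Intersecting) (h₂ : (𝒜 : Set (Finset α)).Sized r)
    (h₃ : r ≤ Fintype.card α / 2) :
    𝒜.card ≤ (Fintype.card α - 1).choose (r - 1) := by
  classical
  let e := Fintype.equivFin α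
  let ℬ : Finset (Finset (Fin (Fintype.card α))) := 𝒜.image (Finset.image e)
  have hinj : Function.Injective (Finset.image e : Finset α → Finset (Fin _)) :=
    Finset.image_injective e.injective
  have hcard : ℬ.card = 𝒜.card := Finset.card_image_of_injective _ hinj
  have hℬi : (ℬ : Set (Finset (Fin (Fintype.card α)))).Intersecting := by
    rintro A hA B hB hAB
    simp only [ℬ, coe_image, Set.mem_image, mem_coe] at hA hB
    obtain ⟨A', hA', rfl⟩ := hA
    obtain ⟨B', hB', rfl⟩ := hB
    exact h𝒜 hA' hB' (Finset.disjoint_image e.injective |>.mp hAB)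
  have hℬs : (ℬ : Set (Finset (Fin (Fintype.card α)))).Sized r := by
    rintro A hA
    simp only [ℬ, coe_image, Set.mem_image, mem_coe] at hA
    obtain ⟨A', hA', rfl⟩ := hA
    rw [Finset.card_image_of_injective _ e.injective]
    exact h₂ hA'
  calc 𝒜.card = ℬ.card := hcard.symm
    _ ≤ _ := Finset.erdos_ko_rado hℬi hℬs h₃

/-- If `H` is a `k`-graph on `m ≥ 2k−b` vertices (`k ≥ 3`, `0 ≤ b < k`) containing no
copy of `Y_{k,b}` (two edges sharing exactly `b` vertices), then
`e(H) ≤ C(m,k)·(k−b)/(m−b)`. -/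
theorem card_le_of_no_Ykb {V : Type*} [Fintype V] [DecidableEq V]
    (k b m : ℕ) (hk : 3 ≤ k) (hb : b < k) (hm : 2 * k - b ≤ m)
    (hV : Fintype.card V = m)
    (E : Finset (Finset V)) (hE : ∀ e ∈ E, e.card = k)
    (hY : ∀ e ∈ E, ∀ f ∈ E, e ≠ f → (e ∩ f).card ≠ b) :
    (E.card : ℝ) ≤ (m.choose k : ℝ) * ((k : ℝ) - b) / ((m : ℝ) - b) := by
  classical
  have hbk : b ≤ k := hb.le
  have hbm : b < m := by omega
  -- the link bound
  have hlink : ∀ S : Finset V, S.card = b →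
      (E.filter (fun e => S ⊆ e)).card ≤ (m - b - 1).choose (k - b - 1) := by
    intro S hS
    set p : V → Prop := fun x => x ∉ S with hp
    set 𝒜 : Finset (Finset {x // p x}) :=
      (E.filter (fun e => S ⊆ e)).image (fun e => (e \ S).subtype p) with h𝒜def
    have hcardα : Fintype.card {x // p x} = m - b := by
      have : Fintype.card {x // p x} = Fintype.card {x // ¬ x ∈ S} := rfl
      rw [this, Fintype.card_subtype_compl, hV]
      congr 1
      rw [← hS]
      exact Fintype.card_coe S
    have key : ∀ e ∈ E.filter (fun e => S ⊆ e),
        ((e \ S).subtype p).map (Function.Embedding.subtype p) = e \ S := by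
      intro e he
      rw [Finset.subtype_map]
      apply Finset.filter_true_of_mem
      intro x hx
      exact (Finset.mem_sdiff.mp hx).2
    have hinj : ∀ e ∈ E.filter (fun e => S ⊆ e), ∀ f ∈ E.filter (fun e => S ⊆ e),
        (e \ S).subtype p = (f \ S).subtype p → e = f := by
      intro e he f hf h
      have h2 : e \ S = f \ S := by
        rw [← key e he, ← key f hf, h]
      have heS := (Finset.mem_filter.mp he).2
      have hfS := (Finset.mem_filter.mp hf).2
      rw [← Finset.union_sdiff_of_subset heS, ← Finset.union_sdiff_of_subset hfS, h2]
    have hcard𝒜 : 𝒜.card = (E.filter (fun e => S ⊆ e)).card := by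
      rw [h𝒜def]
      exact Finset.card_image_of_injOn hinj
    have h𝒜i : (𝒜 : Set (Finset {x // p x})).Intersecting := by
      rintro A hA B hB hAB
      simp only [h𝒜def, coe_image, Set.mem_image, mem_coe] at hA hB
      obtain ⟨e, he, rfl⟩ := hA
      obtain ⟨f, hf, rfl⟩ := hB
      have hd : Disjoint (e \ S) (f \ S) := by
        rw [← key e he, ← key f hf]
        exact Finset.disjoint_map _ |>.mpr hAB
      have heE := (Finset.mem_filter.mp he).1
      have hfE := (Finset.mem_filter.mp hf).1
      have heS := (Finset.mem_filter.mp he).2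
      have hfS := (Finset.mem_filter.mp hf).2
      have hef : e = f := by
        by_contra hne
        apply hY e heE f hfE hne
        have : e ∩ f = S := by
          apply Finset.Subset.antisymm
          · intro x hx
            rcases Finset.mem_inter.mp hx with ⟨hxe, hxf⟩
            by_contra hxS
            exact Finset.disjoint_left.mp hd (Finset.mem_sdiff.mpr ⟨hxe, hxS⟩)
              (Finset.mem_sdiff.mpr ⟨hxf, hxS⟩)
          · exact Finset.subset_inter heS hfS
        rw [this, hS]
      subst hef
      have hne : (e \ S).Nonempty := by
        rw [← Finset.card_pos, Finset.card_sdiff_of_subset (Finset.mem_filter.mp he).2, hS,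
          hE e heE]
        omega
      obtain ⟨x, hx⟩ := hne
      exact Finset.disjoint_left.mp hd hx hx
    have h𝒜s : (𝒜 : Set (Finset {x // p x})).Sized (k - b) := by
      rintro A hA
      simp only [h𝒜def, coe_image, Set.mem_image, mem_coe] at hA
      obtain ⟨e, he, rfl⟩ := hA
      have hc := congrArg Finset.card (key e he)
      rw [Finset.card_map] at hc
      rw [hc, Finset.card_sdiff_of_subset (Finset.mem_filter.mp he).2, hS,
        hE e (Finset.mem_filter.mp he).1]
    have h3 : k - b ≤ Fintype.card {x // p x} / 2 := by
      rw [hcardα, Nat.le_div_iff_mul_le (by norm_num)]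
      omega
    calc (E.filter (fun e => S ⊆ e)).card = 𝒜.card := hcard𝒜.symm
      _ ≤ (Fintype.card {x // p x} - 1).choose (k - b - 1) := erdos_ko_rado_general h𝒜i h𝒜s h3
      _ = (m - b - 1).choose (k - b - 1) := by rw [hcardα]
  -- double counting
  have hcount : ∀ e ∈ E,
      (∑ S ∈ Finset.univ.powersetCard b, if S ⊆ e then 1 else 0) = k.choose b := by
    intro e he
    rw [← Finset.card_filter]
    have h1 : (Finset.univ.powersetCard b).filter (fun S => S ⊆ e) = e.powersetCard b := by
      ext S
      simp [Finset.mem_powersetCard, and_comm]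
    rw [h1, Finset.card_powersetCard, hE e he]
  have hdc : ∑ S ∈ Finset.univ.powersetCard b, (E.filter (fun e => S ⊆ e)).card
      = E.card * k.choose b := by
    simp_rw [Finset.card_filter]
    rw [Finset.sum_comm, Finset.sum_congr rfl hcount, Finset.sum_const, smul_eq_mul]
  have hbound : E.card * k.choose b ≤ m.choose b * (m - b - 1).choose (k - b - 1) := by
    rw [← hdc]
    calc ∑ S ∈ Finset.univ.powersetCard b, (E.filter (fun e => S ⊆ e)).card
        ≤ ∑ S ∈ Finset.univ.powersetCard b, (m - b - 1).choose (k - b - 1) := by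
          apply Finset.sum_le_sum
          intro S hS
          exact hlink S (Finset.mem_powersetCard.mp hS).2
      _ = m.choose b * (m - b - 1).choose (k - b - 1) := by
          rw [Finset.sum_const, smul_eq_mul, Finset.card_powersetCard, Finset.card_univ, hV]
  -- arithmetic
  have hkm : k ≤ m := by omega
  have hid : m.choose b * (m - b - 1).choose (k - b - 1) * (m - b)
      = m.choose k * k.choose b * (k - b) := by
    have h1 : (m - b) * (m - b - 1).choose (k - b - 1) = (m - b).choose (k - b) * (k - b) := by
      have := Nat.add_one_mul_choose_eq (m - b - 1) (k - b - 1)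
      have e1 : Nat.succ (m - b - 1) = m - b := by omega
      have e2 : Nat.succ (k - b - 1) = k - b := by omega
      rw [Nat.succ_eq_add_one] at e1 e2; rwa [e1, e2] at this
    have h2 : m.choose k * k.choose b = m.choose b * (m - b).choose (k - b) :=
      Nat.choose_mul hbk
    calc m.choose b * (m - b - 1).choose (k - b - 1) * (m - b)
        = m.choose b * ((m - b) * (m - b - 1).choose (k - b - 1)) := by ring
      _ = m.choose b * ((m - b).choose (k - b) * (k - b)) := by rw [h1]
      _ = m.choose k * k.choose b * (k - b) := by rw [← Nat.mul_assoc, ← h2]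
  have hnat : E.card * k.choose b * (m - b) ≤ m.choose k * k.choose b * (k - b) := by
    rw [← hid]
    exact Nat.mul_le_mul_right _ hbound
  have hch : (0 : ℝ) < (k.choose b : ℝ) := by exact_mod_cast Nat.choose_pos hbk
  have hmb : (0 : ℝ) < (m : ℝ) - b := by
    have : (b : ℝ) < m := by exact_mod_cast hbm
    linarith
  rw [div_eq_mul_inv, ← div_eq_mul_inv, le_div_iff₀ hmb]
  have hcast : (E.card : ℝ) * (k.choose b : ℝ) * ((m : ℝ) - b)
      ≤ (m.choose k : ℝ) * (k.choose b : ℝ) * ((k : ℝ) - b) := by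
    have := hnat
    have h1 : ((E.card * k.choose b * (m - b) : ℕ) : ℝ)
        ≤ ((m.choose k * k.choose b * (k - b) : ℕ) : ℝ) := by exact_mod_cast this
    push_cast [Nat.cast_sub hbm.le, Nat.cast_sub hbk] at h1
    linarith
  nlinarith [hcast, hch]
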